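/- Let n ∈ ℕ and let X_1,…,X_n be independent real-valued random variables on a probability space such that the law of each X_i is absolutely continuous with respect to Lebesgue measure. Then almost surely, for all subsets I, J ⊆ {1,…,n} with I ≠ J one has ∑_{i∈I} X_i ≠ ∑_{j∈J} X_j. -/

import Mathlib

open MeasureTheory

lemma aux_add_ne_zero {Ω : Type*} [MeasurableSpace Ω] (P : Measure Ω) [IsProbabilityMeasure P]
    {f g : Ω → ℝ} (hf : Measurable f) (hg : Measurable g)
    (hfg : ProbabilityTheory.IndepFun f g P) (hac : P.map f ≪ volume) :
    P {ω | f ω + g ω = 0} = 0 := by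
  have hmap := (ProbabilityTheory.indepFun_iff_map_prod_eq_prod_map_map
    hf.aemeasurable hg.aemeasurable).1 hfg
  have hS : MeasurableSet {p : ℝ × ℝ | p.1 + p.2 = 0} :=
    measurableSet_eq_fun (by fun_prop) measurable_const
  have h1 : P {ω | f ω + g ω = 0}
      = (P.map f).prod (P.map g) {p : ℝ × ℝ | p.1 + p.2 = 0} := by
    rw [← hmap, Measure.map_apply (hf.prodMk hg) hS]
    rfl
  rw [h1, Measure.prod_apply_symm hS]
  have h2 : ∀ y : ℝ, (P.map f) ((fun x => (x, y)) ⁻¹' {p : ℝ × ℝ | p.1 + p.2 = 0}) = 0 := by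
    intro y
    have : ((fun x => (x, y)) ⁻¹' {p : ℝ × ℝ | p.1 + p.2 = 0}) = {-y} := by
      ext x
      simp [add_eq_zero_iff_eq_neg]
    rw [this]
    exact hac (measure_singleton _)
  simp only [h2, lintegral_zero]

/-- If `X_1, …, X_n` are independent real random variables whose laws are absolutely
continuous with respect to Lebesgue measure, then almost surely all their subset sums are
pairwise distinct. -/
theorem stmt12 {Ω : Type*} [MeasurableSpace Ω] (P : Measure Ω) [IsProbabilityMeasure P]
    (n : ℕ) (X : Fin n → Ω → ℝ) (hmeas : ∀ i, Measurable (X i))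
    (hindep : ProbabilityTheory.iIndepFun X P)
    (hac : ∀ i, Measure.map (X i) P ≪ volume) :
    ∀ᵐ ω ∂P, ∀ I J : Finset (Fin n), I ≠ J → ∑ i ∈ I, X i ω ≠ ∑ j ∈ J, X j ω := by
  rw [ae_all_iff]
  intro I
  rw [ae_all_iff]
  intro J
  by_cases hIJ : I = J
  · simp [hIJ]
  -- signed variables
  set Z : Fin n → Ω → ℝ := fun k ω => if k ∈ J then -X k ω else X k ω with hZ
  have hZmeas : ∀ k, Measurable (Z k) := fun k => by
    by_cases h : k ∈ J <;> simp only [hZ, h, if_true, if_false] <;> fun_prop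
  have hZindep : ProbabilityTheory.iIndepFun Z P := by
    have := hindep.comp (g := fun k : Fin n => fun x : ℝ => if k ∈ J then -x else x)
      (fun k => by by_cases h : k ∈ J <;> simp [h] <;> fun_prop)
    exact this
  have hZac : ∀ k, P.map (Z k) ≪ volume := by
    intro k
    by_cases h : k ∈ J
    · have : P.map (Z k) = (P.map (X k)).map Neg.neg := by
        rw [Measure.map_map measurable_neg (hmeas k)]
        simp only [hZ, h, if_true]
        rfl
      rw [this]
      calc (P.map (X k)).map Neg.neg ≪ (volume : Measure ℝ).map Neg.neg :=
            (hac k).map measurable_neg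
        _ = volume := Measure.map_neg_eq_self _
    · have : Z k = X k := by funext ω; simp [hZ, h]
      rw [this]; exact hac k
  set S : Finset (Fin n) := (I \ J) ∪ (J \ I) with hs
  have hSne : S.Nonempty := by
    by_contra h
    rw [Finset.not_nonempty_iff_eq_empty, Finset.union_eq_empty, Finset.sdiff_eq_empty_iff_subset,
      Finset.sdiff_eq_empty_iff_subset] at h
    exact hIJ (Finset.Subset.antisymm h.1 h.2)
  obtain ⟨i, hi⟩ := hSne
  have hiS : i ∉ S.erase i := Finset.notMem_erase i S
  have hind : ProbabilityTheory.IndepFun (∑ j ∈ S.erase i, Z j) (Z i) P :=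
    hZindep.indepFun_finsetSum_of_notMem hZmeas hiS
  have hsum_meas : Measurable (∑ j ∈ S.erase i, Z j) := by
    have : Measurable (fun ω => ∑ j ∈ S.erase i, Z j ω) :=
      Finset.measurable_sum _ (fun j _ => hZmeas j)
    simpa [Finset.sum_fn] using this
  have hkey : P {ω | Z i ω + ∑ j ∈ S.erase i, Z j ω = 0} = 0 := by
    have := aux_add_ne_zero P (hZmeas i) (f := Z i) (g := ∑ j ∈ S.erase i, Z j)
      hsum_meas hind.symm (hZac i)
    convert this using 2
    ext ω
    simp
  have hset : {ω | ∑ i ∈ I, X i ω = ∑ j ∈ J, X j ω}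
      = {ω | Z i ω + ∑ j ∈ S.erase i, Z j ω = 0} := by
    ext ω
    have hsum : Z i ω + ∑ j ∈ S.erase i, Z j ω = ∑ j ∈ S, Z j ω :=
      Finset.add_sum_erase S (fun j => Z j ω) hi
    have hZS : ∑ j ∈ S, Z j ω = ∑ j ∈ I \ J, X j ω - ∑ j ∈ J \ I, X j ω := by
      rw [hs, Finset.sum_union (by
        rw [Finset.disjoint_left]
        intro a ha hb
        exact (Finset.mem_sdiff.1 ha).2 (Finset.mem_sdiff.1 hb).1)]
      have h1 : ∑ j ∈ I \ J, Z j ω = ∑ j ∈ I \ J, X j ω :=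
        Finset.sum_congr rfl (fun j hj => by
          simp [hZ, (Finset.mem_sdiff.1 hj).2])
      have h2 : ∑ j ∈ J \ I, Z j ω = -∑ j ∈ J \ I, X j ω := by
        rw [← Finset.sum_neg_distrib]
        exact Finset.sum_congr rfl (fun j hj => by
          simp [hZ, (Finset.mem_sdiff.1 hj).1])
      rw [h1, h2]
      ring
    have hI : ∑ j ∈ I, X j ω = ∑ j ∈ I ∩ J, X j ω + ∑ j ∈ I \ J, X j ω := by
      rw [Finset.sum_inter_add_sum_sdiff]
    have hJ : ∑ j ∈ J, X j ω = ∑ j ∈ I ∩ J, X j ω + ∑ j ∈ J \ I, X j ω := by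
      rw [Finset.inter_comm, Finset.sum_inter_add_sum_sdiff]
    simp only [Set.mem_setOf_eq, hsum, hZS, hI, hJ]
    constructor
    · intro h; linarith
    · intro h; linarith
  rw [ae_iff]
  convert hkey using 2
  ext ω
  simp only [Set.mem_setOf_eq, not_not, ← hset]
  tauto
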